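/- Assume the standing hypotheses on a, q, f, let u₀ be measurable and compactly supported with 0 ≤ u₀ ≤ 1, u₀ ≢ 0, and let u be a classical solution of ∂_t u = a(x)∂_xx u + q(x)∂_x u + f(x,u) with u(0,·) = u₀ and 0 ≤ u ≤ 1, and assume there exists c > 0 with lim_{t→+∞} inf_{|x| ≤ ct} u(t,x) = 1. Define Z_ε(t,x) := ε ln u(t/ε, x/ε). Then for every compact set Q ⊂ (0,∞)×ℝ there exist constants C = C(Q) > 0 and ε₀ = ε₀(Q) > 0 such that |Z_ε(t,x)| ≤ C for all 0 < ε < ε₀ and all (t,x) ∈ Q. -/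

import Mathlib

open Real Filter Set

open Topology


lemma left_deriv_nonpos {h : ℝ → ℝ} {h' t : ℝ} (hd : HasDerivAt h h' t)
    (hmin : ∀ᶠ s in nhdsWithin t (Set.Iio t), h t ≤ h s) : h' ≤ 0 := by
  have hs : Tendsto (slope h t) (𝓝[≠] t) (𝓝 h') := hasDerivAt_iff_tendsto_slope.mp hd
  have hs' : Tendsto (slope h t) (𝓝[<] t) (𝓝 h') :=
    hs.mono_left (nhdsWithin_mono _ (fun y hy => ne_of_lt hy))
  have hev : ∀ᶠ s in 𝓝[<] t, slope h t s ≤ 0 := by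
    filter_upwards [hmin, self_mem_nhdsWithin] with s h1 h2
    rw [slope_def_field]
    have h3 : s - t < 0 := sub_neg.mpr h2
    exact div_nonpos_of_nonneg_of_nonpos (by linarith) h3.le
  exact le_of_tendsto hs' hev

lemma second_deriv_nonneg_of_isLocalMin {g g' : ℝ → ℝ} {g2 x : ℝ}
    (hd : ∀ y, HasDerivAt g (g' y) y) (hd2 : HasDerivAt g' g2 x)
    (hmin : IsLocalMin g x) : 0 ≤ g2 := by
  by_contra hneg
  push_neg at hneg
  have h0 : g' x = 0 := hmin.hasDerivAt_eq_zero (hd x)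
  have hs : Tendsto (slope g' x) (𝓝[≠] x) (𝓝 g2) := hasDerivAt_iff_tendsto_slope.mp hd2
  have hs' : Tendsto (slope g' x) (𝓝[>] x) (𝓝 g2) :=
    hs.mono_left (nhdsWithin_mono _ (fun y hy => ne_of_gt hy))
  have hev : ∀ᶠ y in 𝓝[>] x, slope g' x y < 0 := hs'.eventually_lt_const hneg
  have hev2 : {y | g' y < 0} ∈ 𝓝[>] x := by
    filter_upwards [hev, self_mem_nhdsWithin] with y h1 h2
    rw [slope_def_field, h0] at h1
    have h3 : 0 < y - x := sub_pos.mpr h2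
    have := mul_neg_of_neg_of_pos h1 h3
    rw [div_mul_cancel₀] at this
    · simpa using this
    · exact ne_of_gt h3
  obtain ⟨b0, hb0, hsub⟩ := mem_nhdsGT_iff_exists_Ioo_subset.mp hev2
  obtain ⟨ε, hεpos, hball⟩ := Metric.eventually_nhds_iff.mp hmin
  set b := min ((x + b0) / 2) (x + ε / 2) with hb
  have hxb0 : x < b0 := hb0
  have hxb : x < b := by
    apply lt_min <;> [linarith; linarith]
  have hbb0 : b < b0 := lt_of_le_of_lt (min_le_left _ _) (by linarith)
  have hanti : StrictAntiOn g (Icc x b) := by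
    apply strictAntiOn_of_deriv_neg (convex_Icc x b)
      (fun y _ => (hd y).continuousAt.continuousWithinAt)
    intro y hy
    rw [interior_Icc] at hy
    rw [(hd y).deriv]
    exact hsub ⟨hy.1, lt_trans hy.2 hbb0⟩
  have h1 : g b < g x := hanti ⟨le_rfl, hxb.le⟩ ⟨hxb.le, le_rfl⟩ hxb
  have h2 : g x ≤ g b := by
    apply hball
    rw [Real.dist_eq, abs_of_pos (sub_pos.mpr hxb)]
    have : b ≤ x + ε / 2 := min_le_right _ _
    linarith
  linarith

lemma log_abs_bound {y B ε lam M : ℝ} (hy1 : y ≤ 1) (hy : (1/4:ℝ) * rexp (-B) ≤ y)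
    (hB0 : 0 ≤ B) (hBle : ε * B ≤ lam * M) (hε : 0 < ε) (hε1 : ε ≤ 1)
    (hlamM : 0 ≤ lam * M) :
    |ε * Real.log y| ≤ lam * M + 2 := by
  have hypos : 0 < y := lt_of_lt_of_le (by positivity) hy
  have hlog1 : Real.log y ≤ 0 := Real.log_nonpos hypos.le hy1
  have hlog2 : Real.log ((1/4:ℝ) * rexp (-B)) ≤ Real.log y := Real.log_le_log (by positivity) hy
  have h4 : Real.log ((1/4:ℝ) * rexp (-B)) = -Real.log 4 + -B := by
    rw [Real.log_mul (by norm_num) (Real.exp_ne_zero _), Real.log_exp,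
      show (1/4:ℝ) = 4⁻¹ by norm_num, Real.log_inv]
  have hlog4 : Real.log 4 ≤ 2 := by
    have h2 : Real.log 4 = 2 * Real.log 2 := by
      rw [show (4:ℝ) = 2 ^ 2 by norm_num, Real.log_pow]; norm_num
    have := Real.log_le_sub_one_of_pos (by norm_num : (0:ℝ) < 2)
    linarith
  have hlog4' : 0 ≤ Real.log 4 := by
    have := Real.log_nonneg (by norm_num : (1:ℝ) ≤ 4); linarith
  rw [abs_of_nonpos (mul_nonpos_of_nonneg_of_nonpos hε.le hlog1)]
  have key : -Real.log y ≤ Real.log 4 + B := by rw [h4] at hlog2; linarith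
  have h5 : ε * (-Real.log y) ≤ ε * (Real.log 4 + B) :=
    mul_le_mul_of_nonneg_left key hε.le
  have h6 : ε * Real.log 4 ≤ Real.log 4 := by nlinarith
  nlinarith

lemma interior_contra {A Qz m Mq c κ lam E1 E2 u1 u2 u3 : ℝ}
    (hm : 0 < m) (hA : m ≤ A) (hQ : |Qz| ≤ Mq) (hc : 0 < c) (hκ : 0 < κ)
    (hlam : κ + c + Mq + 1 ≤ m * lam) (hlam0 : 0 < lam)
    (hE1 : 0 < E1) (hE2 : 0 < E2) (hE21 : E2 ≤ E1)
    (hsupz : A * u3 + Qz * u2 ≤ u1)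
    (hux : u2 = (1/2) * (E1 * (lam * -1)))
    (huxx : 0 ≤ u3 - (1/2) * ((E1 * (lam * -1)) * (lam * -1)))
    (hut : u1 - (1/2) * (E1 * (lam * (c*1)) - E2 * (lam*κ*(-1))) ≤ 0) : False := by
  obtain ⟨hq1, hq2⟩ := abs_le.mp hQ
  have hP : 0 < lam * E1 := mul_pos hlam0 hE1
  have t0 : A * lam ≤ A * lam := le_rfl
  have t1 : (κ + c + Mq + 1) * (lam * E1) ≤ (A * lam) * (lam * E1) := by
    apply mul_le_mul_of_nonneg_right _ hP.le
    calc κ + c + Mq + 1 ≤ m * lam := hlam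
      _ ≤ A * lam := mul_le_mul_of_nonneg_right hA hlam0.le
  have t2 : Qz * (lam * E1) ≤ Mq * (lam * E1) := mul_le_mul_of_nonneg_right hq2 hP.le
  have t3 : κ * (lam * E2) ≤ κ * (lam * E1) :=
    mul_le_mul_of_nonneg_left (mul_le_mul_of_nonneg_left hE21 hlam0.le) hκ.le
  have hkey : A * ((1/2) * ((E1 * (lam * -1)) * (lam * -1))) + Qz * ((1/2) * (E1 * (lam * -1)))
      ≤ (1/2) * (E1 * (lam * (c*1)) - E2 * (lam*κ*(-1))) := by
    have h1 : A * ((1/2) * ((E1 * (lam * -1)) * (lam * -1))) ≤ A * u3 := by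
      apply mul_le_mul_of_nonneg_left _ (by linarith)
      linarith
    rw [hux] at hsupz
    linarith
  nlinarith [hkey, t1, t2, t3, hP]

lemma onesided
    (a q : ℝ → ℝ) (u ut ux uxx : ℝ → ℝ → ℝ)
    (m Mq c κ lam T t₁ : ℝ)
    (hm : 0 < m) (ha : ∀ x, m ≤ a x) (hq : ∀ x, |q x| ≤ Mq)
    (hc : 0 < c) (hκ : 0 < κ)
    (hlam : κ + c + Mq + 1 ≤ m * lam)
    (hT : 0 < T) (hTt : T ≤ t₁)
    (hcont : ContinuousOn (fun pr : ℝ × ℝ => u pr.1 pr.2) (Set.Ici T ×ˢ Set.univ))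
    (hder : ∀ t, T ≤ t → ∀ x,
      HasDerivAt (fun τ => u τ x) (ut t x) t ∧
      HasDerivAt (fun y => u t y) (ux t x) x ∧
      HasDerivAt (fun y => ux t y) (uxx t x) x)
    (hsup : ∀ t, T ≤ t → ∀ x, a x * uxx t x + q x * ux t x ≤ ut t x)
    (hu0 : ∀ t, T ≤ t → ∀ x, 0 ≤ u t x)
    (hcone : ∀ t, T ≤ t → 1/2 ≤ u t (c*t)) :
    ∀ x₁, c*t₁ ≤ x₁ → x₁ ≤ c*t₁ + κ*(t₁ - T) →
      (1/2) * (rexp (lam*(c*t₁ - x₁)) - rexp (lam*κ*(T - t₁))) ≤ u t₁ x₁ := by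
  have hMq0 : 0 ≤ Mq := le_trans (abs_nonneg _) (hq 0)
  have hlam0 : 0 < lam := by nlinarith
  set w : ℝ → ℝ → ℝ :=
    fun t x => (1/2) * (rexp (lam*(c*t - x)) - rexp (lam*κ*(T - t))) with hw
  set Ω : Set (ℝ × ℝ) :=
    {p : ℝ × ℝ | T ≤ p.1 ∧ p.1 ≤ t₁ ∧ c*p.1 ≤ p.2 ∧ p.2 ≤ c*p.1 + κ*(p.1 - T)} with hΩ
  have hmain : ∀ p ∈ Ω, w p.1 p.2 ≤ u p.1 p.2 := by
    have hclosed : IsClosed Ω := by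
      apply IsClosed.inter
      · exact isClosed_le continuous_const continuous_fst
      apply IsClosed.inter
      · exact isClosed_le continuous_fst continuous_const
      apply IsClosed.inter
      · exact isClosed_le (continuous_const.mul continuous_fst) continuous_snd
      · exact isClosed_le continuous_snd (by fun_prop)
    have hsubbox : Ω ⊆ Set.Icc T t₁ ×ˢ Set.Icc (c*T) (c*t₁ + κ*(t₁ - T)) := by
      rintro ⟨s, z⟩ ⟨h1, h2, h3, h4⟩
      dsimp only at h1 h2 h3 h4
      refine ⟨⟨h1, h2⟩, ⟨?_, ?_⟩⟩
      · calc c*T ≤ c*s := by nlinarith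
          _ ≤ z := h3
      · calc z ≤ c*s + κ*(s - T) := h4
          _ ≤ c*t₁ + κ*(t₁ - T) := by nlinarith
    have hcomp : IsCompact Ω :=
      ((isCompact_Icc).prod (isCompact_Icc)).of_isClosed_subset hclosed hsubbox
    have hne : Ω.Nonempty := by
      refine ⟨(t₁, c*t₁), hTt, le_rfl, le_rfl, ?_⟩
      show c*t₁ ≤ c*t₁ + κ*(t₁ - T)
      nlinarith
    have hΩsub : Ω ⊆ Set.Ici T ×ˢ Set.univ := fun p hp => ⟨hp.1, trivial⟩
    have hvcont : ContinuousOn (fun p : ℝ × ℝ => u p.1 p.2 - w p.1 p.2) Ω := by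
      apply ContinuousOn.sub (hcont.mono hΩsub)
      fun_prop
    obtain ⟨p0, hp0, hminp⟩ := hcomp.exists_isMinOn hne hvcont
    obtain ⟨s, z⟩ := p0
    obtain ⟨hs1, hs2, hz1, hz2⟩ := hp0
    dsimp only at hs1 hs2 hz1 hz2
    suffices h0 : 0 ≤ u s z - w s z by
      intro p hp
      have h : u s z - w s z ≤ u p.1 p.2 - w p.1 p.2 := hminp hp
      linarith
    by_contra hneg
    push_neg at hneg
    rcases eq_or_lt_of_le hs1 with hsT | hsT
    · have hzT : z = c*s := by nlinarith [hz2, hz1]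
      have hwz : w s z = 0 := by
        rw [hw]; simp only [hzT, ← hsT]
        rw [show lam*(c*T - c*T) = 0 by ring, show lam*κ*(T - T) = 0 by ring]
        simp
      rw [hwz] at hneg
      exact absurd (hu0 s hs1 z) (by linarith)
    rcases eq_or_lt_of_le hz1 with hzl | hzl
    · have hwle : w s z ≤ 1/2 := by
        rw [hw, ← hzl]
        simp only
        rw [show lam*(c*s - c*s) = 0 by ring]
        have : 0 < rexp (lam*κ*(T - s)) := exp_pos _
        simp only [Real.exp_zero]
        nlinarith
      have := hcone s hs1
      rw [← hzl] at hneg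
      rw [← hzl] at hwle
      linarith
    rcases eq_or_lt_of_le hz2 with hzr | hzr
    · have hwz : w s z = 0 := by
        rw [hw]; simp only
        rw [hzr, show lam*(c*s - (c*s + κ*(s - T))) = lam*κ*(T - s) by ring]
        simp
      rw [hwz] at hneg
      exact absurd (hu0 s hs1 z) (by linarith)
    · -- interior point
      set E1 : ℝ := rexp (lam*(c*s - z)) with hE1
      set E2 : ℝ := rexp (lam*κ*(T - s)) with hE2
      have hE1pos : 0 < E1 := exp_pos _
      have hE2pos : 0 < E2 := exp_pos _
      have hE21 : E2 ≤ E1 := by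
        apply Real.exp_le_exp.mpr
        nlinarith
      have hwx : ∀ y : ℝ, HasDerivAt (fun y => w s y)
          ((1/2) * (rexp (lam*(c*s - y)) * (lam * -1))) y := by
        intro y
        have h1 : HasDerivAt (fun y : ℝ => c*s - y) (-1) y := (hasDerivAt_id y).const_sub (c*s)
        have h2 : HasDerivAt (fun y : ℝ => lam*(c*s - y)) (lam * -1) y := h1.const_mul lam
        exact (h2.exp.sub_const (rexp (lam*κ*(T - s)))).const_mul (1/2 : ℝ)
      have hwt : HasDerivAt (fun τ => w τ z)
          ((1/2) * (rexp (lam*(c*s - z)) * (lam * (c*1)) - rexp (lam*κ*(T - s)) * (lam*κ*(-1)))) s := by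
        have h1 : HasDerivAt (fun τ : ℝ => c*τ - z) (c*1) s :=
          ((hasDerivAt_id s).const_mul c).sub_const z
        have h2 := (h1.const_mul lam).exp
        have h3 : HasDerivAt (fun τ : ℝ => T - τ) (-1) s := (hasDerivAt_id s).const_sub T
        have h4 := (h3.const_mul (lam*κ)).exp
        exact (h2.sub h4).const_mul (1/2 : ℝ)
      have hlocmin : IsLocalMin (fun y => u s y - w s y) z := by
        have hoo : Set.Ioo (c*s) (c*s + κ*(s - T)) ∈ 𝓝 z := Ioo_mem_nhds hzl hzr
        filter_upwards [hoo] with y hy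
        exact hminp (⟨hs1, hs2, hy.1.le, hy.2.le⟩ : (s, y) ∈ Ω)
      have hg : ∀ y, HasDerivAt (fun y => u s y - w s y)
          (ux s y - (1/2) * (rexp (lam*(c*s - y)) * (lam * -1))) y :=
        fun y => ((hder s hs1 y).2.1).sub (hwx y)
      have hdx0 : ux s z - (1/2) * (rexp (lam*(c*s - z)) * (lam * -1)) = 0 :=
        hlocmin.hasDerivAt_eq_zero (hg z)
      have hwxx : HasDerivAt (fun y => (1/2) * (rexp (lam*(c*s - y)) * (lam * -1)))
          ((1/2) * ((rexp (lam*(c*s - z)) * (lam * -1)) * (lam * -1))) z := by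
        have h1 : HasDerivAt (fun y : ℝ => c*s - y) (-1) z := (hasDerivAt_id z).const_sub (c*s)
        exact ((h1.const_mul lam).exp.mul_const (lam * -1)).const_mul (1/2 : ℝ)
      have hg2 : HasDerivAt (fun y => ux s y - (1/2) * (rexp (lam*(c*s - y)) * (lam * -1)))
          (uxx s z - (1/2) * ((rexp (lam*(c*s - z)) * (lam * -1)) * (lam * -1))) z :=
        ((hder s hs1 z).2.2).sub hwxx
      have hdxx : 0 ≤ uxx s z - (1/2) * ((rexp (lam*(c*s - z)) * (lam * -1)) * (lam * -1)) :=
        second_deriv_nonneg_of_isLocalMin hg hg2 hlocmin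
      have hht : HasDerivAt (fun τ => u τ z - w τ z)
          (ut s z - (1/2) * (rexp (lam*(c*s - z)) * (lam * (c*1)) - rexp (lam*κ*(T - s)) * (lam*κ*(-1)))) s :=
        ((hder s hs1 z).1).sub hwt
      have hdt : ut s z - (1/2) * (rexp (lam*(c*s - z)) * (lam * (c*1)) - rexp (lam*κ*(T - s)) * (lam*κ*(-1))) ≤ 0 := by
        apply left_deriv_nonpos hht
        have hev1 : ∀ᶠ τ in 𝓝 s, T < τ := eventually_gt_nhds hsT
        have hca : ContinuousAt (fun τ : ℝ => c*τ + κ*(τ - T)) s := by fun_prop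
        have hev2 : ∀ᶠ τ in 𝓝 s, z < c*τ + κ*(τ - T) := hca.eventually (eventually_gt_nhds hzr)
        filter_upwards [eventually_nhdsWithin_of_eventually_nhds hev1,
          eventually_nhdsWithin_of_eventually_nhds hev2, self_mem_nhdsWithin] with τ h1 h2 h3
        have hτs : τ < s := h3
        have hτΩ : (τ, z) ∈ Ω := by
          refine ⟨h1.le, le_trans hτs.le hs2, ?_, h2.le⟩
          show c*τ ≤ z
          have : c*τ ≤ c*s := mul_le_mul_of_nonneg_left hτs.le hc.le
          linarith
        exact hminp hτΩ
      exact interior_contra hm (ha z) (hq z) hc hκ hlam hlam0 hE1pos hE2pos hE21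
        (hsup s hs1 z) (by rw [hE1]; linarith) (by rw [hE1]; exact hdxx) (by rw [hE1, hE2]; exact hdt)
  intro x₁ hx1 hx2
  exact hmain (t₁, x₁) ⟨hTt, le_rfl, hx1, hx2⟩

/-- Standing hypotheses on the coefficients `a`, `q` and the nonlinearity `f`
(`fs x s` denotes the partial derivative `f_s'(x,s)`). -/
def StandingHyp (a q : ℝ → ℝ) (f fs : ℝ → ℝ → ℝ) (γ : ℝ) : Prop :=
  (0 < γ ∧ γ < 1) ∧
  (UniformContinuous a ∧ ∃ M, ∀ x, |a x| ≤ M) ∧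
  (UniformContinuous q ∧ ∃ M, ∀ x, |q x| ≤ M) ∧
  (∃ m > 0, ∀ x, m ≤ a x) ∧
  (∀ ε > 0, ∃ δ > 0, ∀ x y : ℝ, |x - y| < δ → ∀ s ∈ Set.Icc (0:ℝ) 1, |f x s - f y s| < ε) ∧
  (∃ M, ∀ x : ℝ, ∀ s ∈ Set.Icc (0:ℝ) 1, |f x s| ≤ M) ∧
  (∀ x : ℝ, ∀ s ∈ Set.Icc (0:ℝ) 1, HasDerivAt (f x) (fs x s) s) ∧
  (∃ C, ∀ x : ℝ, ∀ s ∈ Set.Icc (0:ℝ) 1, ∀ t ∈ Set.Icc (0:ℝ) 1,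
      |fs x s - fs x t| ≤ C * |s - t| ^ γ) ∧
  (∀ x : ℝ, f x 0 = 0 ∧ f x 1 = 0) ∧
  (∀ s ∈ Set.Ioo (0:ℝ) 1, ∃ m > 0, ∀ x : ℝ, m ≤ f x s) ∧
  (∀ x : ℝ, ∀ s ∈ Set.Icc (0:ℝ) 1, f x s ≤ fs x 0 * s) ∧
  (∃ m > 0, ∃ R : ℝ, ∀ x : ℝ, R ≤ |x| → m ≤ 4 * fs x 0 * a x - q x ^ 2)

/-- A classical solution of `∂_t u = a ∂_xx u + q ∂_x u + f(x,u)` on `(0,∞) × ℝ`,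
continuous on `[0,∞) × ℝ`, `C¹` in `t` and `C²` in `x` on `(0,∞) × ℝ`. -/
def ClassicalSolution (a q : ℝ → ℝ) (f : ℝ → ℝ → ℝ) (u ut ux uxx : ℝ → ℝ → ℝ) : Prop :=
  ContinuousOn (fun pr : ℝ × ℝ => u pr.1 pr.2) (Set.Ici 0 ×ˢ Set.univ) ∧
  (∀ t > (0:ℝ), ∀ x : ℝ,
    HasDerivAt (fun τ => u τ x) (ut t x) t ∧
    HasDerivAt (fun y => u t y) (ux t x) x ∧
    HasDerivAt (fun y => ux t y) (uxx t x) x ∧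
    ut t x = a x * uxx t x + q x * ux t x + f x (u t x)) ∧
  ContinuousOn (fun pr : ℝ × ℝ => ut pr.1 pr.2) (Set.Ioi 0 ×ˢ Set.univ) ∧
  ContinuousOn (fun pr : ℝ × ℝ => ux pr.1 pr.2) (Set.Ioi 0 ×ˢ Set.univ) ∧
  ContinuousOn (fun pr : ℝ × ℝ => uxx pr.1 pr.2) (Set.Ioi 0 ×ˢ Set.univ)

set_option maxHeartbeats 1000000 in
/-- Lemma 4.1 ii. Local uniform boundedness of
`Z_ε(t,x) = ε log u(t/ε, x/ε)` on compact subsets of `(0,∞) × ℝ`. -/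
theorem Zeps_locally_bounded
    (a q : ℝ → ℝ) (f fs : ℝ → ℝ → ℝ) (γ : ℝ)
    (hst : StandingHyp a q f fs γ)
    (u₀ : ℝ → ℝ) (hu₀_meas : Measurable u₀) (hu₀_supp : HasCompactSupport u₀)
    (hu₀_01 : ∀ x, u₀ x ∈ Set.Icc (0:ℝ) 1) (hu₀_ne : ∃ x, u₀ x ≠ 0)
    (u ut ux uxx : ℝ → ℝ → ℝ)
    (hsol : ClassicalSolution a q f u ut ux uxx)
    (hinit : ∀ x, u 0 x = u₀ x)
    (hu01 : ∀ t ≥ (0:ℝ), ∀ x : ℝ, u t x ∈ Set.Icc (0:ℝ) 1)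
    (hspread : ∃ c > 0, ∀ ε > 0, ∃ T : ℝ, ∀ t ≥ T, ∀ x : ℝ, |x| ≤ c * t → |u t x - 1| ≤ ε) :
    ∀ Q : Set (ℝ × ℝ), IsCompact Q → Q ⊆ Set.Ioi 0 ×ˢ Set.univ →
      ∃ C > 0, ∃ ε₀ > 0, ∀ ε : ℝ, 0 < ε → ε < ε₀ → ∀ p ∈ Q,
        |ε * Real.log (u (p.1 / ε) (p.2 / ε))| ≤ C := by
  intro Q hQc hQsub
  rcases Q.eq_empty_or_nonempty with rfl | hQne
  · exact ⟨1, one_pos, 1, one_pos, fun ε _ _ p hp => absurd hp (by simp)⟩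
  obtain ⟨-, -, ⟨-, Mq, hMq⟩, ⟨m, hm, ham⟩, -, -, -, -, h01', hfpos, -, -⟩ := hst
  have hMq0 : 0 ≤ Mq := le_trans (abs_nonneg _) (hMq 0)
  -- f is nonnegative on [0,1]
  have hfnn : ∀ x s, s ∈ Set.Icc (0:ℝ) 1 → 0 ≤ f x s := by
    intro x s hs
    rcases eq_or_lt_of_le hs.1 with h0 | h0
    · rw [← h0, (h01' x).1]
    rcases eq_or_lt_of_le hs.2 with h1 | h1
    · rw [h1, (h01' x).2]
    · obtain ⟨ms, hms, hsm⟩ := hfpos s ⟨h0, h1⟩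
      linarith [hsm x]
  obtain ⟨c, hcpos, hsp⟩ := hspread
  obtain ⟨T₀, hT₀⟩ := hsp (1/2) (by norm_num)
  set T : ℝ := max T₀ 1 with hTdef
  have hT1 : (1:ℝ) ≤ T := le_max_right _ _
  have hTpos : (0:ℝ) < T := by linarith
  -- geometry of Q
  obtain ⟨p₀, hp₀Q, hp₀min⟩ := hQc.exists_isMinOn hQne continuous_fst.continuousOn
  set t₀ : ℝ := p₀.1 with ht₀def
  have ht₀pos : 0 < t₀ := (hQsub hp₀Q).1
  obtain ⟨r, hr⟩ := hQc.isBounded.subset_closedBall 0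
  set M : ℝ := max r 1 with hMdef
  have hM1 : (1:ℝ) ≤ M := le_max_right _ _
  have hxM : ∀ p ∈ Q, |p.2| ≤ M := by
    intro p hp
    have h1 : dist p 0 ≤ r := hr hp
    rw [dist_zero_right] at h1
    calc |p.2| = ‖p.2‖ := rfl
      _ ≤ ‖p‖ := norm_snd_le p
      _ ≤ r := h1
      _ ≤ M := le_max_left _ _
  set κ : ℝ := (4*M + 2)/t₀ with hκdef
  have hκpos : 0 < κ := by positivity
  set lam : ℝ := max 1 ((κ + c + Mq + 1)/m) with hlamdef
  have hlam1 : (1:ℝ) ≤ lam := le_max_left _ _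
  have hlam0 : (0:ℝ) < lam := by linarith
  have hmlam : κ + c + Mq + 1 ≤ m * lam := by
    have h1 : (κ + c + Mq + 1)/m ≤ lam := le_max_right _ _
    rw [div_le_iff₀ hm] at h1
    linarith
  have hlamM : 0 ≤ lam * M := by positivity
  refine ⟨lam * M + 2, by positivity, min 1 (t₀/(2*T)), by positivity, ?_⟩
  intro ε hε hεlt p hp
  have hε1 : ε ≤ 1 := le_of_lt (lt_of_lt_of_le hεlt (min_le_left _ _))
  have hεT : ε < t₀/(2*T) := lt_of_lt_of_le hεlt (min_le_right _ _)
  have ht₀t : t₀ ≤ p.1 := hp₀min hp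
  have hxMp : |p.2| ≤ M := hxM p hp
  set t₁ : ℝ := p.1 / ε with ht₁def
  have ht₁2T : 2*T ≤ t₁ := by
    have h1 : ε * (2*T) < t₀ := by
      rw [lt_div_iff₀ (by linarith : 0 < 2*T)] at hεT
      linarith
    have h2 : 2*T ≤ t₀/ε := (le_div_iff₀ hε).mpr (by linarith)
    have h3 : t₀/ε ≤ t₁ := (div_le_div_iff_of_pos_right hε).mpr ht₀t
    linarith
  have ht₁T : T ≤ t₁ := by linarith
  have ht₁pos : 0 < t₁ := by linarith
  have hTdiff : t₀/(2*ε) ≤ t₁ - T := by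
    have h3 : t₀/ε ≤ t₁ := (div_le_div_iff_of_pos_right hε).mpr ht₀t
    have : t₀/(2*ε) = (t₀/ε)/2 := by ring
    rw [this]
    linarith
  have hκb : (2*M + 1)/ε ≤ κ*(t₁ - T) := by
    have h1 : κ * (t₀/(2*ε)) ≤ κ*(t₁ - T) := mul_le_mul_of_nonneg_left hTdiff hκpos.le
    have h2 : κ * (t₀/(2*ε)) = (2*M + 1)/ε := by
      rw [hκdef]
      field_simp
      ring
    linarith
  have hu1 : u t₁ (p.2/ε) ≤ 1 := (hu01 t₁ ht₁pos.le (p.2/ε)).2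
  have hu0' : 0 ≤ u t₁ (p.2/ε) := (hu01 t₁ ht₁pos.le (p.2/ε)).1
  -- the cone lower bound
  have hconeu : ∀ t' x', T ≤ t' → |x'| ≤ c*t' → 1/2 ≤ u t' x' := by
    intro t' x' ht' hx'
    have h1 := hT₀ t' (le_trans (le_max_left _ _) ht') x' hx'
    have h2 := (abs_le.mp h1).1
    linarith
  -- case analysis
  rcases le_or_gt |p.2| (c * p.1) with hcase | hcase
  · -- inside the cone
    have hxc : |p.2/ε| ≤ c * t₁ := by
      rw [abs_div, abs_of_pos hε, ht₁def, mul_div_assoc']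
      exact (div_le_div_iff_of_pos_right hε).mpr hcase
    have hv : 1/2 ≤ u t₁ (p.2/ε) := hconeu t₁ (p.2/ε) ht₁T hxc
    have := log_abs_bound (B := 0) (ε := ε) (lam := lam) (M := M) hu1
      (by rw [neg_zero, Real.exp_zero]; linarith) le_rfl (by simpa using hlamM) hε hε1 hlamM
    exact this
  · -- outside the cone
    have hct₁ : 0 ≤ c * t₁ := by positivity
    -- common hypotheses for `onesided`
    have hderu : ∀ t', T ≤ t' → ∀ x',
        HasDerivAt (fun τ => u τ x') (ut t' x') t' ∧
        HasDerivAt (fun y => u t' y) (ux t' x') x' ∧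
        HasDerivAt (fun y => ux t' y) (uxx t' x') x' := by
      intro t' ht' x'
      obtain ⟨h1, h2, h3, -⟩ := hsol.2.1 t' (lt_of_lt_of_le hTpos ht') x'
      exact ⟨h1, h2, h3⟩
    have hsupu : ∀ t', T ≤ t' → ∀ x', a x' * uxx t' x' + q x' * ux t' x' ≤ ut t' x' := by
      intro t' ht' x'
      have h4 := (hsol.2.1 t' (lt_of_lt_of_le hTpos ht') x').2.2.2
      have h5 := hfnn x' (u t' x') (hu01 t' (by linarith) x')
      linarith
    have hcontu : ContinuousOn (fun pr : ℝ × ℝ => u pr.1 pr.2) (Set.Ici T ×ˢ Set.univ) :=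
      hsol.1.mono (Set.prod_mono_left (Set.Ici_subset_Ici.mpr hTpos.le))
    have hu0u : ∀ t', T ≤ t' → ∀ x', 0 ≤ u t' x' := fun t' ht' x' =>
      (hu01 t' (by linarith) x').1
    -- the point, reduced to the right half line
    rcases le_or_gt 0 p.2 with hx0 | hx0
    · -- x ≥ 0 : apply onesided directly
      have hxx : p.2 = |p.2| := (abs_of_nonneg hx0).symm
      have hconer : ∀ t', T ≤ t' → 1/2 ≤ u t' (c*t') := by
        intro t' ht'
        exact hconeu t' (c*t') ht'
          (by rw [abs_of_nonneg (mul_nonneg hcpos.le (le_trans hTpos.le ht'))])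
      have hx1 : c*t₁ ≤ p.2/ε := by
        rw [ht₁def, mul_div_assoc']
        exact (div_le_div_iff_of_pos_right hε).mpr (by linarith [abs_of_nonneg hx0])
      have hxM' : p.2/ε ≤ M/ε :=
        (div_le_div_iff_of_pos_right hε).mpr (by linarith [le_abs_self p.2])
      have hx2 : p.2/ε ≤ c*t₁ + κ*(t₁ - T) := by
        have : (M:ℝ)/ε ≤ (2*M+1)/ε := (div_le_div_iff_of_pos_right hε).mpr (by linarith)
        linarith
      have hlow := onesided a q u ut ux uxx m Mq c κ lam T t₁ hm ham hMq hcpos hκpos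
        hmlam hTpos ht₁T hcontu hderu hsupu hu0u hconer (p.2/ε) hx1 hx2
      -- convert to the (1/4) exp(-B) form
      set B : ℝ := lam * (p.2/ε - c*t₁) with hBdef
      have hB0 : 0 ≤ B := by
        rw [hBdef]
        have := sub_nonneg.mpr hx1
        positivity
      have hE2small : rexp (lam*κ*(T - t₁)) ≤ (1/2) * rexp (lam*(c*t₁ - p.2/ε)) := by
        have hhalf : (1/2:ℝ) * rexp (lam*(c*t₁ - p.2/ε)) = rexp (lam*(c*t₁ - p.2/ε) - Real.log 2) := by
          rw [Real.exp_sub, Real.exp_log (by norm_num : (0:ℝ) < 2)]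
          ring
        rw [hhalf]
        apply Real.exp_le_exp.mpr
        have hlog2 : Real.log 2 ≤ 1 := by
          have := Real.log_le_sub_one_of_pos (by norm_num : (0:ℝ) < 2)
          linarith
        -- need : lam*κ*(T - t₁) ≤ lam*(c*t₁ - p.2/ε) - log 2
        -- i.e. lam*(p.2/ε - c*t₁) + log 2 ≤ lam*κ*(t₁-T)
        have h1 : lam*(p.2/ε - c*t₁) ≤ lam*(M/ε) :=
          mul_le_mul_of_nonneg_left (by linarith) hlam0.le
        have h2 : lam*((2*M+1)/ε) ≤ lam*(κ*(t₁ - T)) :=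
          mul_le_mul_of_nonneg_left hκb hlam0.le
        have h3 : (M+1:ℝ) ≤ (M+1)/ε := by
          rw [le_div_iff₀ hε]
          nlinarith
        have h4 : lam*(M/ε) + lam*((M+1)/ε) = lam*((2*M+1)/ε) := by ring
        have h5 : (1:ℝ)*(M+1) ≤ lam*((M+1)/ε) := by
          apply mul_le_mul hlam1 h3 (by linarith) hlam0.le
        nlinarith
      have hlow2 : (1/4:ℝ) * rexp (-B) ≤ u t₁ (p.2/ε) := by
        have hEeq : rexp (-B) = rexp (lam*(c*t₁ - p.2/ε)) := by
          congr 1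
          rw [hBdef]; ring
        rw [hEeq]
        linarith [hlow, hE2small]
      have hBle : ε * B ≤ lam * M := by
        have h1 : B ≤ lam * (M/ε) := by
          rw [hBdef]
          apply mul_le_mul_of_nonneg_left (by linarith) hlam0.le
        have h2 : ε * B ≤ ε * (lam * (M/ε)) := mul_le_mul_of_nonneg_left h1 hε.le
        have h3 : ε * (lam * (M/ε)) = lam * M := by
          field_simp
        linarith
      exact log_abs_bound hu1 hlow2 hB0 hBle hε hε1 hlamM
    · -- x < 0 : reflect
      have hxx : -p.2 = |p.2| := (abs_of_neg hx0).symm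
      -- reflected data
      set a' : ℝ → ℝ := fun y => a (-y) with ha'def
      set q' : ℝ → ℝ := fun y => -q (-y) with hq'def
      set u' : ℝ → ℝ → ℝ := fun t' y => u t' (-y) with hu'def
      set ut' : ℝ → ℝ → ℝ := fun t' y => ut t' (-y) with hut'def
      set ux' : ℝ → ℝ → ℝ := fun t' y => -ux t' (-y) with hux'def
      set uxx' : ℝ → ℝ → ℝ := fun t' y => uxx t' (-y) with huxx'def
      have ham' : ∀ y, m ≤ a' y := fun y => ham (-y)
      have hMq' : ∀ y, |q' y| ≤ Mq := by
        intro y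
        rw [hq'def]
        simpa using hMq (-y)
      have hderu' : ∀ t', T ≤ t' → ∀ x',
          HasDerivAt (fun τ => u' τ x') (ut' t' x') t' ∧
          HasDerivAt (fun y => u' t' y) (ux' t' x') x' ∧
          HasDerivAt (fun y => ux' t' y) (uxx' t' x') x' := by
        intro t' ht' x'
        obtain ⟨h1, h2, h3, -⟩ := hsol.2.1 t' (lt_of_lt_of_le hTpos ht') (-x')
        refine ⟨h1, ?_, ?_⟩
        · have h2' := h2.comp x' (hasDerivAt_neg x')
          simpa [hu'def, hux'def, Function.comp_def, mul_neg_one] using h2'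
        · have h3' := (h3.comp x' (hasDerivAt_neg x')).neg
          simpa [hux'def, huxx'def, Function.comp_def, Pi.neg_def, mul_neg_one] using h3'
      have hsupu' : ∀ t', T ≤ t' → ∀ x', a' x' * uxx' t' x' + q' x' * ux' t' x' ≤ ut' t' x' := by
        intro t' ht' x'
        have h4 := hsupu t' ht' (-x')
        rw [ha'def, hq'def, hut'def, hux'def, huxx'def]
        dsimp only
        have heq : (-q (-x')) * (-ux t' (-x')) = q (-x') * ux t' (-x') := by ring
        linarith
      have hcontu' : ContinuousOn (fun pr : ℝ × ℝ => u' pr.1 pr.2) (Set.Ici T ×ˢ Set.univ) := by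
        have hrefl : Continuous (fun pr : ℝ × ℝ => (pr.1, -pr.2)) := by fun_prop
        exact hcontu.comp hrefl.continuousOn
          (fun pr (hpr : pr ∈ Set.Ici T ×ˢ Set.univ) =>
            Set.mk_mem_prod hpr.1 (Set.mem_univ _))
      have hu0u' : ∀ t', T ≤ t' → ∀ x', 0 ≤ u' t' x' := fun t' ht' x' => hu0u t' ht' (-x')
      have hconer' : ∀ t', T ≤ t' → 1/2 ≤ u' t' (c*t') := by
        intro t' ht'
        apply hconeu t' (-(c*t')) ht'
        rw [abs_neg, abs_of_nonneg (mul_nonneg hcpos.le (le_trans hTpos.le ht'))]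
      have hx1 : c*t₁ ≤ -p.2/ε := by
        rw [ht₁def, mul_div_assoc']
        exact (div_le_div_iff_of_pos_right hε).mpr (by linarith)
      have hxM' : -p.2/ε ≤ M/ε := (div_le_div_iff_of_pos_right hε).mpr (by linarith)
      have hx2 : -p.2/ε ≤ c*t₁ + κ*(t₁ - T) := by
        have : (M:ℝ)/ε ≤ (2*M+1)/ε := (div_le_div_iff_of_pos_right hε).mpr (by linarith)
        linarith
      have hlow := onesided a' q' u' ut' ux' uxx' m Mq c κ lam T t₁ hm ham' hMq' hcpos hκpos
        hmlam hTpos ht₁T hcontu' hderu' hsupu' hu0u' hconer' (-p.2/ε) hx1 hx2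
      have hueq : u' t₁ (-p.2/ε) = u t₁ (p.2/ε) := by
        rw [hu'def]
        dsimp only
        rw [neg_div, neg_neg]
      rw [hueq] at hlow
      set B : ℝ := lam * (-p.2/ε - c*t₁) with hBdef
      have hB0 : 0 ≤ B := by
        rw [hBdef]
        have := sub_nonneg.mpr hx1
        positivity
      have hE2small : rexp (lam*κ*(T - t₁)) ≤ (1/2) * rexp (lam*(c*t₁ - -p.2/ε)) := by
        have hhalf : (1/2:ℝ) * rexp (lam*(c*t₁ - -p.2/ε)) = rexp (lam*(c*t₁ - -p.2/ε) - Real.log 2) := by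
          rw [Real.exp_sub, Real.exp_log (by norm_num : (0:ℝ) < 2)]
          ring
        rw [hhalf]
        apply Real.exp_le_exp.mpr
        have hlog2 : Real.log 2 ≤ 1 := by
          have := Real.log_le_sub_one_of_pos (by norm_num : (0:ℝ) < 2)
          linarith
        have h1 : lam*(-p.2/ε - c*t₁) ≤ lam*(M/ε) :=
          mul_le_mul_of_nonneg_left (by linarith) hlam0.le
        have h2 : lam*((2*M+1)/ε) ≤ lam*(κ*(t₁ - T)) :=
          mul_le_mul_of_nonneg_left hκb hlam0.le
        have h3 : (M+1:ℝ) ≤ (M+1)/ε := by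
          rw [le_div_iff₀ hε]
          nlinarith
        have h4 : lam*(M/ε) + lam*((M+1)/ε) = lam*((2*M+1)/ε) := by ring
        have h5 : (1:ℝ)*(M+1) ≤ lam*((M+1)/ε) := by
          apply mul_le_mul hlam1 h3 (by linarith) hlam0.le
        nlinarith
      have hlow2 : (1/4:ℝ) * rexp (-B) ≤ u t₁ (p.2/ε) := by
        have hEeq : rexp (-B) = rexp (lam*(c*t₁ - -p.2/ε)) := by
          congr 1
          rw [hBdef]; ring
        rw [hEeq]
        linarith [hlow, hE2small]
      have hBle : ε * B ≤ lam * M := by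
        have h1 : B ≤ lam * (M/ε) := by
          rw [hBdef]
          apply mul_le_mul_of_nonneg_left (by linarith) hlam0.le
        have h2 : ε * B ≤ ε * (lam * (M/ε)) := mul_le_mul_of_nonneg_left h1 hε.le
        have h3 : ε * (lam * (M/ε)) = lam * M := by
          field_simp
        linarith
      exact log_abs_bound hu1 hlow2 hB0 hBle hε hε1 hlamM
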